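/- With the bilinear form B^ρ bounded and coercive uniformly in ρ, the solution (u₀^ρ(·,ω), u₁^ρ(·,·,ω)) of the truncated two-scale homogenized problem satisfies the a priori bounds ‖u₀^ρ(·,ω)‖_{H¹₀(D)} ≤ c and ‖u₁^ρ(·,·,ω)‖_{L²(D,H¹₀(Y^ρ))} ≤ c |Y^ρ|^{1/2}, where c depends only on the coercivity constant and ‖f‖_{H⁻¹(D)}, not on ρ or ω. -/
import Mathlib


open MeasureTheory Matrix Filter

noncomputable section

/-- Euclidean norm of a vector in `ℝ^d`. -/
def vnorm {d : ℕ} (v : Fin d → ℝ) : ℝ := Real.sqrt (v ⬝ᵥ v)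

/-- The truncated cube `Y^ρ = (-ρ,ρ)^d`. -/
def Yset (d : ℕ) (ρ : ℝ) : Set (Fin d → ℝ) := {y | ∀ i, |y i| < ρ}

/-- `|Y^ρ| = (2ρ)^d`. -/
def volY (d : ℕ) (ρ : ℝ) : ℝ := (2 * ρ) ^ d

/-- The truncated two-scale bilinear form `B^ρ(ω)`, written in terms of gradient
representatives `g₀ = ∇w₀`, `g₁ = ∇_y w₁`, `h₀ = ∇φ₀`, `h₁ = ∇_y φ₁`. -/
def Bform (d : ℕ) {Ω : Type*} (T : (Fin d → ℝ) → Ω → Ω)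
    (A : (Fin d → ℝ) → Ω → Matrix (Fin d) (Fin d) ℝ) (D : Set (Fin d → ℝ))
    (ρ : ℝ) (ω : Ω)
    (g₀ : (Fin d → ℝ) → Fin d → ℝ) (g₁ : (Fin d → ℝ) → (Fin d → ℝ) → Fin d → ℝ)
    (h₀ : (Fin d → ℝ) → Fin d → ℝ) (h₁ : (Fin d → ℝ) → (Fin d → ℝ) → Fin d → ℝ) : ℝ :=
  (volY d ρ)⁻¹ * ∫ x in D, ∫ y in Yset d ρ,
    (A x (T y ω)).mulVec (g₀ x + g₁ x y) ⬝ᵥ (h₀ x + h₁ x y)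

/-- **A priori bounds for the solution of the truncated two-scale homogenized problem.**
With `B^ρ` coercive uniformly in `ρ` (constant `c`), the solution `(u₀^ρ, u₁^ρ)` of
`B^ρ(ω;(u₀^ρ,u₁^ρ),(φ₀,φ₁)) = f(φ₀)` satisfies `‖u₀^ρ‖ ≤ c⁻¹‖f‖` and
`‖u₁^ρ‖ ≤ c⁻¹‖f‖ |Y^ρ|^{1/2}`; the constants depend only on the coercivity constant and
`‖f‖_{H⁻¹(D)}`, not on `ρ` or `ω`. -/
theorem stmt1 {d : ℕ} {Ω : Type*} (T : (Fin d → ℝ) → Ω → Ω)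
    (A : (Fin d → ℝ) → Ω → Matrix (Fin d) (Fin d) ℝ)
    (D : Set (Fin d → ℝ)) (ρ : ℝ) (hρ : 0 < ρ) (ω : Ω) (c : ℝ) (hc : 0 < c)
    (V : Type*) [NormedAddCommGroup V] [InnerProductSpace ℝ V]
    (V₁ : Type*) [NormedAddCommGroup V₁] [InnerProductSpace ℝ V₁]
    (grad : V →ₗ[ℝ] ((Fin d → ℝ) → Fin d → ℝ))
    (grady : V₁ →ₗ[ℝ] ((Fin d → ℝ) → (Fin d → ℝ) → Fin d → ℝ))
    (f : V →L[ℝ] ℝ)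
    -- uniform coercivity of `B^ρ(ω)`
    (hcoer : ∀ (w₀ : V) (w₁ : V₁),
      c * (‖w₀‖ ^ 2 + (volY d ρ)⁻¹ * ‖w₁‖ ^ 2)
        ≤ Bform d T A D ρ ω (grad w₀) (grady w₁) (grad w₀) (grady w₁))
    (u₀ : V) (u₁ : V₁)
    -- the variational equation tested with the solution itself
    (heq : Bform d T A D ρ ω (grad u₀) (grady u₁) (grad u₀) (grady u₁) = f u₀) :
    ‖u₀‖ ≤ c⁻¹ * ‖f‖ ∧ ‖u₁‖ ≤ c⁻¹ * ‖f‖ * Real.sqrt (volY d ρ) := by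
  have hV : 0 < volY d ρ := by
    have : (0:ℝ) < 2 * ρ := by linarith
    exact pow_pos this d
  have key : c * (‖u₀‖ ^ 2 + (volY d ρ)⁻¹ * ‖u₁‖ ^ 2) ≤ ‖f‖ * ‖u₀‖ := by
    calc c * (‖u₀‖ ^ 2 + (volY d ρ)⁻¹ * ‖u₁‖ ^ 2)
        ≤ Bform d T A D ρ ω (grad u₀) (grady u₁) (grad u₀) (grady u₁) := hcoer u₀ u₁
      _ = f u₀ := heq
      _ ≤ ‖f‖ * ‖u₀‖ := le_trans (le_abs_self _) (f.le_opNorm u₀)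
  have hVi : 0 < (volY d ρ)⁻¹ := inv_pos.mpr hV
  have h0 : ‖u₀‖ ≤ c⁻¹ * ‖f‖ := by
    rcases eq_or_lt_of_le (norm_nonneg u₀) with h | h
    · rw [← h]; positivity
    · have h1 : c * ‖u₀‖ ^ 2 ≤ ‖f‖ * ‖u₀‖ := by
        have e : c * (‖u₀‖ ^ 2 + (volY d ρ)⁻¹ * ‖u₁‖ ^ 2)
            = c * ‖u₀‖ ^ 2 + c * ((volY d ρ)⁻¹ * ‖u₁‖ ^ 2) := by ring
        have hn : 0 ≤ c * ((volY d ρ)⁻¹ * ‖u₁‖ ^ 2) :=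
          mul_nonneg hc.le (mul_nonneg hVi.le (sq_nonneg _))
        linarith [key, e, hn]
      rw [le_inv_mul_iff₀ hc]
      nlinarith
  refine ⟨h0, ?_⟩
  have h2 : ‖u₁‖ ^ 2 ≤ (c⁻¹ * ‖f‖ * Real.sqrt (volY d ρ)) ^ 2 := by
    have hs : Real.sqrt (volY d ρ) ^ 2 = volY d ρ := Real.sq_sqrt hV.le
    have h3 : c * ((volY d ρ)⁻¹ * ‖u₁‖ ^ 2) ≤ ‖f‖ * (c⁻¹ * ‖f‖) := by
      have e : c * (‖u₀‖ ^ 2 + (volY d ρ)⁻¹ * ‖u₁‖ ^ 2)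
          = c * ‖u₀‖ ^ 2 + c * ((volY d ρ)⁻¹ * ‖u₁‖ ^ 2) := by ring
      have hn : 0 ≤ c * ‖u₀‖ ^ 2 := mul_nonneg hc.le (sq_nonneg _)
      have h7 : ‖f‖ * ‖u₀‖ ≤ ‖f‖ * (c⁻¹ * ‖f‖) :=
        mul_le_mul_of_nonneg_left h0 (norm_nonneg f)
      linarith [key, e, hn, h7]
    have h4 : ‖u₁‖ ^ 2 ≤ c⁻¹ * ‖f‖ * (c⁻¹ * ‖f‖) * volY d ρ := by
      have h5 : (volY d ρ)⁻¹ * ‖u₁‖ ^ 2 ≤ c⁻¹ * (‖f‖ * (c⁻¹ * ‖f‖)) := by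
        rw [le_inv_mul_iff₀ hc]; exact h3
      have h6 := mul_le_mul_of_nonneg_left h5 hV.le
      rw [← mul_assoc, mul_inv_cancel₀ hV.ne', one_mul] at h6
      calc ‖u₁‖ ^ 2 ≤ volY d ρ * (c⁻¹ * (‖f‖ * (c⁻¹ * ‖f‖))) := h6
        _ = c⁻¹ * ‖f‖ * (c⁻¹ * ‖f‖) * volY d ρ := by ring
    calc ‖u₁‖ ^ 2 ≤ c⁻¹ * ‖f‖ * (c⁻¹ * ‖f‖) * volY d ρ := h4
      _ = (c⁻¹ * ‖f‖ * Real.sqrt (volY d ρ)) ^ 2 := by rw [mul_pow, hs]; ring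
  have hnn : (0:ℝ) ≤ c⁻¹ * ‖f‖ * Real.sqrt (volY d ρ) := by positivity
  exact (pow_le_pow_iff_left₀ (norm_nonneg _) hnn two_ne_zero).mp h2
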